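/- For every d ∈ (0,1), the WENO-PPM5 mapping function is 4 times differentiable at ω = d with g⁽ʲ⁾(d) = 0 for all 1 ≤ j ≤ 4 (the one-sided derivatives of orders 1 through 4 of both branches vanish at d), while the one-sided fifth derivatives at d equal 5!/d⁴ from the left and 5!/(1−d)⁴ from the right, both nonzero. -/

import Mathlib

noncomputable def qAux (m : ℕ) (x : ℝ) : ℝ := (max x 0) ^ m

lemma qAux_cont (m : ℕ) : Continuous (qAux m) :=
  (continuous_id.max continuous_const).pow m

lemma qAux_zero (m : ℕ) (hm : 1 ≤ m) : qAux m 0 = 0 := by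
  simp [qAux, zero_pow (by omega : m ≠ 0)]

lemma qAux_hasDerivAt (m : ℕ) (x : ℝ) :
    HasDerivAt (qAux (m + 2)) ((m + 2 : ℝ) * qAux (m + 1) x) x := by
  rcases lt_trichotomy x 0 with h | h | h
  · have hev : qAux (m + 2) =ᶠ[nhds x] fun _ => (0 : ℝ) := by
      filter_upwards [Iio_mem_nhds h] with y hy
      simp [qAux, max_eq_right (le_of_lt (Set.mem_Iio.mp hy)), zero_pow (by omega : m + 2 ≠ 0)]
    have : HasDerivAt (qAux (m + 2)) 0 x :=
      (hasDerivAt_const x (0 : ℝ)).congr_of_eventuallyEq hev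
    convert this using 1
    simp [qAux, max_eq_right h.le, zero_pow (by omega : m + 1 ≠ 0)]
  · subst h
    have hval : (m + 2 : ℝ) * qAux (m + 1) 0 = 0 := by
      simp [qAux_zero (m + 1) (by omega)]
    rw [hval, hasDerivAt_iff_isLittleO, Asymptotics.isLittleO_iff]
    intro c hc
    have hp : (0 : ℝ) < min c 1 := lt_min hc one_pos
    filter_upwards [Metric.ball_mem_nhds (0 : ℝ) hp] with y hy
    have hy' : |y| < min c 1 := by simpa [Real.dist_eq] using hy
    have h1 : |y| ≤ 1 := le_of_lt (lt_of_lt_of_le hy' (min_le_right _ _))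
    have h2 : |y| ≤ c := le_of_lt (lt_of_lt_of_le hy' (min_le_left _ _))
    have hb : max y 0 ≤ |y| := max_le (le_abs_self y) (abs_nonneg y)
    have hb0 : (0:ℝ) ≤ max y 0 := le_max_right _ _
    have hq1 : qAux (m + 2) y ≤ |y| ^ (m + 2) := by
      exact pow_le_pow_left₀ hb0 hb _
    have hq0 : 0 ≤ qAux (m + 2) y := pow_nonneg hb0 _
    have hpow : |y| ^ (m + 1) ≤ |y| := by
      calc |y| ^ (m + 1) ≤ |y| ^ 1 :=
            pow_le_pow_of_le_one (abs_nonneg y) h1 (by omega)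
        _ = |y| := pow_one _
    simp only [qAux_zero (m + 2) (by omega), sub_zero, mul_zero, smul_zero,
      Real.norm_eq_abs]
    rw [abs_of_nonneg hq0]
    calc qAux (m + 2) y ≤ |y| ^ (m + 2) := hq1
      _ = |y| ^ (m + 1) * |y| := by ring
      _ ≤ |y| * |y| := by
          apply mul_le_mul_of_nonneg_right _ (abs_nonneg y)
          exact le_trans hpow (le_refl _)
      _ ≤ c * |y| := mul_le_mul_of_nonneg_right h2 (abs_nonneg y)
  · have hev : qAux (m + 2) =ᶠ[nhds x] fun y => y ^ (m + 2) := by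
      filter_upwards [Ioi_mem_nhds h] with y hy
      simp [qAux, max_eq_left (le_of_lt (Set.mem_Ioi.mp hy))]
    have : HasDerivAt (qAux (m + 2)) ((m + 2 : ℝ) * x ^ (m + 1)) x := by
      have := hasDerivAt_pow (m + 2) x
      rw [show m + 2 - 1 = m + 1 by omega] at this
      exact (this.congr_of_eventuallyEq hev).congr_deriv (by push_cast; ring)
    convert this using 2
    simp [qAux, max_eq_left h.le]

lemma qAux_contDiff : ∀ n : ℕ, ContDiff ℝ (n : ℕ) (qAux (n + 1)) := by
  intro n
  induction n with
  | zero => exact contDiff_zero.mpr (qAux_cont 1)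
  | succ k ih =>
    rw [show ((k + 1 : ℕ) : WithTop ℕ∞) = (k : ℕ) + 1 by push_cast; rfl,
      contDiff_succ_iff_deriv]
    refine ⟨fun x => (qAux_hasDerivAt k x).differentiableAt, ?_, ?_⟩
    · intro h; exact absurd h (by simp)
    · have : deriv (qAux (k + 2)) = fun x => (k + 2 : ℝ) * qAux (k + 1) x :=
        funext fun x => (qAux_hasDerivAt k x).deriv
      rw [this]
      exact contDiff_const.mul ih

lemma hasDeriv_sumAux (d B C : ℝ) (m : ℕ) (x : ℝ) :
    HasDerivAt (fun ω : ℝ => B * (ω - d) ^ (m + 2) + C * qAux (m + 2) (ω - d))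
      ((B * (m + 2)) * (x - d) ^ (m + 1) + (C * (m + 2)) * qAux (m + 1) (x - d)) x := by
  have hsub : HasDerivAt (fun ω : ℝ => ω - d) 1 x := (hasDerivAt_id x).sub_const d
  have hp := (hsub.pow (m + 2)).const_mul B
  have hqc : HasDerivAt (fun ω : ℝ => qAux (m + 2) (ω - d))
      ((m + 2 : ℝ) * qAux (m + 1) (x - d)) x := by
    have := (qAux_hasDerivAt m (x - d)).comp x hsub
    rw [mul_one] at this
    exact this
  have h := hp.add (hqc.const_mul C)
  refine h.congr_deriv ?_
  rw [show m + 2 - 1 = m + 1 by omega]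
  push_cast
  ring_nf

lemma iterSumAux (d b c : ℝ) (n j : ℕ) (hj : j + 1 ≤ n) :
    iteratedDeriv j (fun ω : ℝ => b * (ω - d) ^ n + c * qAux n (ω - d)) =
      fun ω => (b * n.descFactorial j) * (ω - d) ^ (n - j) +
        (c * n.descFactorial j) * qAux (n - j) (ω - d) := by
  induction j with
  | zero =>
    funext ω
    simp [iteratedDeriv_zero]
  | succ k ih =>
    have hk : k + 1 ≤ n := by omega
    rw [iteratedDeriv_succ, ih hk]
    obtain ⟨m, hm⟩ : ∃ m, n - k = m + 2 := ⟨n - k - 2, by omega⟩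
    funext x
    have h1 : HasDerivAt (fun ω : ℝ => (b * n.descFactorial k) * (ω - d) ^ (n - k) +
        (c * n.descFactorial k) * qAux (n - k) (ω - d))
        (((b * n.descFactorial k) * (m + 2)) * (x - d) ^ (m + 1) +
          ((c * n.descFactorial k) * (m + 2)) * qAux (m + 1) (x - d)) x := by
      rw [hm]
      exact_mod_cast hasDeriv_sumAux d (b * n.descFactorial k) (c * n.descFactorial k) m x
    rw [h1.deriv]
    have hcast : ((n.descFactorial (k + 1) : ℕ) : ℝ) = (m + 2 : ℝ) * n.descFactorial k := by
      rw [Nat.descFactorial_succ, hm]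
      push_cast
      ring
    rw [show n - (k + 1) = m + 1 by omega, hcast]
    ring_nf

lemma derivF (d a c : ℝ) :
    deriv (fun ω : ℝ => d + (a * (ω - d) ^ 5 + c * qAux 5 (ω - d))) =
      fun ω => (a * 5) * (ω - d) ^ 4 + (c * 5) * qAux 4 (ω - d) := by
  funext x
  have h := (hasDerivAt_const x d).add (hasDeriv_sumAux d a c 3 x)
  norm_num at h
  exact h.deriv

lemma iterF_mid (d a c : ℝ) (k : ℕ) (hk : k + 1 ≤ 4) :
    iteratedDeriv (k + 1) (fun ω : ℝ => d + (a * (ω - d) ^ 5 + c * qAux 5 (ω - d))) d = 0 := by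
  rw [iteratedDeriv_succ', derivF, iterSumAux d (a * 5) (c * 5) 4 k hk]
  have h1 : 1 ≤ 4 - k := by omega
  simp [sub_self, zero_pow (by omega : 4 - k ≠ 0), qAux_zero _ h1]

lemma iterF_five (d a : ℝ) :
    iteratedDeriv 5 (fun ω : ℝ => d + (a * (ω - d) ^ 5 + 0 * qAux 5 (ω - d))) d = 120 * a := by
  have h4 : iteratedDeriv 4 (fun ω : ℝ => d + (a * (ω - d) ^ 5 + 0 * qAux 5 (ω - d))) =
      fun ω : ℝ => (a * 120) * (ω - d) := by
    rw [show (4 : ℕ) = 3 + 1 from rfl, iteratedDeriv_succ', derivF,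
      iterSumAux d (a * 5) (0 * 5) 4 3 (by norm_num)]
    funext ω
    simp only [show (4 : ℕ).descFactorial 3 = 24 from rfl, show (4 : ℕ) - 3 = 1 from rfl,
      pow_one, Nat.cast_ofNat, zero_mul, add_zero]
    ring
  rw [show (5 : ℕ) = 4 + 1 from rfl, iteratedDeriv_succ, h4]
  have h : HasDerivAt (fun ω : ℝ => (a * 120) * (ω - d)) (a * 120) d := by
    simpa using ((hasDerivAt_id d).sub_const d).const_mul (a * 120)
  rw [h.deriv]
  ring

/-- The left branch (ω ≤ d) of the WENO-PPM5 mapping function. -/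
noncomputable def gPPM5L (d ω : ℝ) : ℝ := d * (1 + (ω / d - 1) ^ 5)

/-- The right branch (ω > d) of the WENO-PPM5 mapping function. -/
noncomputable def gPPM5R (d ω : ℝ) : ℝ := d + (ω - d) ^ 5 / (d - 1) ^ 4

/-- The WENO-PPM5 mapping function. -/
noncomputable def gPPM5 (d ω : ℝ) : ℝ := if ω ≤ d then gPPM5L d ω else gPPM5R d ω


theorem wenoPPM5_derivatives (d : ℝ) (hd : d ∈ Set.Ioo (0 : ℝ) 1) :
    ContDiffAt ℝ 4 (gPPM5 d) d ∧
    (∀ j : ℕ, 1 ≤ j → j ≤ 4 →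
      iteratedDeriv j (gPPM5 d) d = 0 ∧
      iteratedDeriv j (gPPM5L d) d = 0 ∧ iteratedDeriv j (gPPM5R d) d = 0) ∧
    iteratedDeriv 5 (gPPM5L d) d = (Nat.factorial 5 : ℝ) / d ^ 4 ∧
    iteratedDeriv 5 (gPPM5R d) d = (Nat.factorial 5 : ℝ) / (1 - d) ^ 4 ∧
    (Nat.factorial 5 : ℝ) / d ^ 4 ≠ 0 ∧ (Nat.factorial 5 : ℝ) / (1 - d) ^ 4 ≠ 0 := by
  obtain ⟨hd0, hd1⟩ := hd
  have hdne : d ≠ 0 := ne_of_gt hd0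
  have hd1ne : d - 1 ≠ 0 := sub_ne_zero.mpr (ne_of_lt hd1)
  have h1dne : (1 : ℝ) - d ≠ 0 := sub_ne_zero.mpr (ne_of_gt hd1)
  have hL : gPPM5L d = fun ω : ℝ => d + ((1 / d ^ 4) * (ω - d) ^ 5 + 0 * qAux 5 (ω - d)) := by
    funext ω
    unfold gPPM5L
    field_simp
    ring
  have hR : gPPM5R d = fun ω : ℝ =>
      d + ((1 / (d - 1) ^ 4) * (ω - d) ^ 5 + 0 * qAux 5 (ω - d)) := by
    funext ω
    unfold gPPM5R
    ring
  have hEq : gPPM5 d = fun ω : ℝ =>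
      d + ((1 / d ^ 4) * (ω - d) ^ 5 + (1 / (d - 1) ^ 4 - 1 / d ^ 4) * qAux 5 (ω - d)) := by
    funext ω
    unfold gPPM5 gPPM5L gPPM5R
    split_ifs with h
    · have hz : qAux 5 (ω - d) = 0 := by
        simp [qAux, max_eq_right (sub_nonpos.mpr h)]
      rw [hz, mul_zero, add_zero]
      field_simp
    · have hz : qAux 5 (ω - d) = (ω - d) ^ 5 := by
        simp [qAux, max_eq_left (sub_nonneg.mpr (not_le.mp h).le)]
      rw [hz]
      field_simp
      ring
  refine ⟨?_, ?_, ?_, ?_, ?_, ?_⟩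
  · rw [hEq]
    have hq5 : ContDiff ℝ 4 (qAux 5) := by exact_mod_cast qAux_contDiff 4
    refine ContDiff.contDiffAt ?_
    refine contDiff_const.add (ContDiff.add ?_ ?_)
    · exact contDiff_const.mul ((contDiff_id.sub contDiff_const).pow 5)
    · exact contDiff_const.mul (hq5.comp (contDiff_id.sub contDiff_const))
  · intro j hj1 hj4
    obtain ⟨k, rfl⟩ : ∃ k, j = k + 1 := ⟨j - 1, by omega⟩
    exact ⟨by rw [hEq]; exact iterF_mid _ _ _ k (by omega),
      by rw [hL]; exact iterF_mid _ _ _ k (by omega),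
      by rw [hR]; exact iterF_mid _ _ _ k (by omega)⟩
  · rw [hL, iterF_five]
    norm_num [Nat.factorial, div_eq_mul_inv]
  · rw [hR, iterF_five]
    have h4 : (d - 1) ^ 4 = (1 - d) ^ 4 := by ring
    rw [h4]
    norm_num [Nat.factorial, div_eq_mul_inv]
  · have : (0 : ℝ) < (Nat.factorial 5 : ℝ) / d ^ 4 := by positivity
    exact this.ne'
  · have hpos : (0 : ℝ) < 1 - d := by linarith
    have : (0 : ℝ) < (Nat.factorial 5 : ℝ) / (1 - d) ^ 4 := by positivity
    exact this.ne'
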